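/- If a positive random variable γ_τ satisfies the calibration property that dμ^{P̄1,γ_τ}/dμ^{P̄0,γ_τ}(b) = b·π(H0)/π(H1) almost everywhere, then E_{P̄0}[γ_τ] = π(H1)/π(H0); consequently the stopped Bayes factor β_τ = γ_τ·π(H0)/π(H1) satisfies E_{P̄0}[β_τ] = 1. -/
import Mathlib


open MeasureTheory
open scoped ENNReal

/-- If the stopped posterior odds `γ_τ` are calibrated, i.e.
`dμ^{P̄1,γ_τ}/dμ^{P̄0,γ_τ}(b) = b·π(H0)/π(H1)` a.e., then
`E_{P̄0}[γ_τ] = π(H1)/π(H0)`, and hence the stopped Bayes factor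
`β_τ = γ_τ·π(H0)/π(H1)` satisfies `E_{P̄0}[β_τ] = 1`. -/
theorem calibrated_stopped_odds_expectation
    {Ω : Type*} [MeasurableSpace Ω]
    (P0 P1 : Measure Ω) [IsProbabilityMeasure P0] [IsProbabilityMeasure P1]
    (π0 π1 : ℝ≥0∞) (hπ0 : 0 < π0) (hπ0' : π0 < ⊤) (hπ1 : 0 < π1) (hπ1' : π1 < ⊤)
    (γ : Ω → ℝ≥0∞) (hγ : Measurable γ) (hγpos : ∀ ω, 0 < γ ω)
    (hac : Measure.map γ P1 ≪ Measure.map γ P0)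
    (hac' : Measure.map γ P0 ≪ Measure.map γ P1)
    (hcal : ∀ᵐ b ∂(Measure.map γ P0),
      (Measure.map γ P1).rnDeriv (Measure.map γ P0) b = b * (π0 / π1)) :
    ∫⁻ ω, γ ω ∂P0 = π1 / π0 ∧ ∫⁻ ω, γ ω * (π0 / π1) ∂P0 = 1 := by
  have hπ01 : π0 / π1 ≠ 0 := by
    simp [ENNReal.div_eq_zero_iff, hπ0.ne', hπ1'.ne]
  have hπ01' : π0 / π1 ≠ ⊤ := by
    simp [ENNReal.div_eq_top, hπ0'.ne, hπ1.ne']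
  have key : ∫⁻ ω, γ ω ∂P0 = π1 / π0 := by
    have h1 : ∫⁻ b, b ∂(Measure.map γ P0)
        = ∫⁻ b, (Measure.map γ P1).rnDeriv (Measure.map γ P0) b * (π1 / π0)
            ∂(Measure.map γ P0) := by
      refine lintegral_congr_ae ?_
      filter_upwards [hcal] with b hb
      have : π0 / π1 * (π1 / π0) = 1 := by
        rw [ENNReal.div_eq_inv_mul, ENNReal.div_eq_inv_mul]
        calc π1⁻¹ * π0 * (π0⁻¹ * π1) = (π0 * π0⁻¹) * (π1⁻¹ * π1) := by ring
        _ = 1 := by rw [ENNReal.mul_inv_cancel hπ0.ne' hπ0'.ne,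
              ENNReal.inv_mul_cancel hπ1.ne' hπ1'.ne, one_mul]
      rw [hb, mul_assoc, this, mul_one]
    have h2 : ∫⁻ b, (Measure.map γ P1).rnDeriv (Measure.map γ P0) b
        ∂(Measure.map γ P0) = 1 := by
      rw [Measure.lintegral_rnDeriv hac]
      simp [Measure.map_apply hγ MeasurableSet.univ]
    rw [lintegral_map (by fun_prop) hγ] at h1
    rw [h1, lintegral_mul_const _ (Measure.measurable_rnDeriv _ _), h2, one_mul]
  refine ⟨key, ?_⟩
  rw [lintegral_mul_const _ hγ, key, ENNReal.div_eq_inv_mul, ENNReal.div_eq_inv_mul]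
  calc π0⁻¹ * π1 * (π1⁻¹ * π0) = (π0⁻¹ * π0) * (π1 * π1⁻¹) := by ring
  _ = 1 := by rw [ENNReal.inv_mul_cancel hπ0.ne' hπ0'.ne,
        ENNReal.mul_inv_cancel hπ1.ne' hπ1'.ne, one_mul]
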